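/- Let Ω = ∏_{k=1}^m Ω_k be a product probability space and X a random variable on Ω that is uniformly difference-bounded by λ/m, i.e., changing any single coordinate changes X by at most λ/m. Let μ = E[X]. Then for any τ > 0, P(X - μ ≥ τ) ≤ exp(-2τ²m/λ²). -/

import Mathlib

open MeasureTheory Real



lemma D_pos {p : ℝ} (hp0 : 0 ≤ p) (hp1 : p ≤ 1) (x : ℝ) : 0 < 1 - p + p * Real.exp x := by
  rcases eq_or_lt_of_le hp1 with h | h
  · subst h; simpa using Real.exp_pos x
  · have : 0 ≤ p * Real.exp x := mul_nonneg hp0 (Real.exp_pos x).le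
    linarith

lemma hasDerivAt_L {p : ℝ} (hp0 : 0 ≤ p) (hp1 : p ≤ 1) (x : ℝ) :
    HasDerivAt (fun x => -x * p + Real.log (1 - p + p * Real.exp x))
      (-p + p * Real.exp x / (1 - p + p * Real.exp x)) x := by
  have hD := D_pos hp0 hp1 x
  have h1 : HasDerivAt (fun x : ℝ => 1 - p + p * Real.exp x) (p * Real.exp x) x :=
    ((Real.hasDerivAt_exp x).const_mul p).const_add (1 - p)
  have h2 : HasDerivAt (fun x => Real.log (1 - p + p * Real.exp x))
      (p * Real.exp x / (1 - p + p * Real.exp x)) x := h1.log hD.ne'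
  simpa [Pi.add_def] using ((hasDerivAt_id x).mul_const (-p)).add h2 |>.congr_deriv (by ring)

lemma hasDerivAt_L' {p : ℝ} (hp0 : 0 ≤ p) (hp1 : p ≤ 1) (x : ℝ) :
    HasDerivAt (fun x => -p + p * Real.exp x / (1 - p + p * Real.exp x))
      (p * Real.exp x / (1 - p + p * Real.exp x)
        - (p * Real.exp x / (1 - p + p * Real.exp x)) ^ 2) x := by
  have hD := D_pos hp0 hp1 x
  have h1 : HasDerivAt (fun x : ℝ => 1 - p + p * Real.exp x) (p * Real.exp x) x :=
    ((Real.hasDerivAt_exp x).const_mul p).const_add (1 - p)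
  have h2 : HasDerivAt (fun x : ℝ => p * Real.exp x) (p * Real.exp x) x :=
    (Real.hasDerivAt_exp x).const_mul p
  have h3 := (h2.div h1 hD.ne').const_add (-p)
  exact h3.congr_deriv (by field_simp)

lemma lemA {p : ℝ} (hp0 : 0 ≤ p) (hp1 : p ≤ 1) {h : ℝ} (hh : 0 ≤ h) :
    -h * p + Real.log (1 - p + p * Real.exp h) ≤ h ^ 2 / 8 := by
  set L : ℝ → ℝ := fun x => -x * p + Real.log (1 - p + p * Real.exp x) with hL
  set φ : ℝ → ℝ := fun x => -p + p * Real.exp x / (1 - p + p * Real.exp x) with hφ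
  set G : ℝ → ℝ := fun x => x ^ 2 / 8 - L x with hG
  have hGd : ∀ x, HasDerivAt G (x / 4 - φ x) x := fun x => by
    have := ((hasDerivAt_pow 2 x).div_const 8).sub (hasDerivAt_L hp0 hp1 x)
    exact this.congr_deriv (by simp [hφ]; push_cast; ring)
  have hG'd : ∀ x, HasDerivAt (fun x => x / 4 - φ x)
      (1 / 4 - (p * Real.exp x / (1 - p + p * Real.exp x)
        - (p * Real.exp x / (1 - p + p * Real.exp x)) ^ 2)) x := fun x =>
    ((hasDerivAt_id x).div_const 4).sub (hasDerivAt_L' hp0 hp1 x)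
  -- G' is monotone on ℝ since its derivative is nonneg
  have hmono : Monotone (fun x => x / 4 - φ x) := by
    apply monotone_of_deriv_nonneg
    · exact fun x => (hG'd x).differentiableAt
    · intro x
      rw [(hG'd x).deriv]
      set g := p * Real.exp x / (1 - p + p * Real.exp x)
      nlinarith [sq_nonneg (1 - 2 * g)]
  have hG'0 : (fun x => x / 4 - φ x) 0 = 0 := by simp [hφ]
  have hG'nonneg : ∀ x, 0 ≤ x → 0 ≤ x / 4 - φ x := fun x hx => by
    have := hmono hx; rw [hG'0] at this; exact this
  have hGmono : MonotoneOn G (Set.Ici 0) := by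
    apply monotoneOn_of_deriv_nonneg (convex_Ici 0)
      (fun x _ => (hGd x).differentiableAt.continuousAt.continuousWithinAt)
      (fun x hx => (hGd x).differentiableAt.differentiableWithinAt)
    intro x hx
    rw [(hGd x).deriv]
    exact hG'nonneg x (le_of_lt (by simpa using hx))
  have := hGmono (Set.mem_Ici.2 le_rfl) (Set.mem_Ici.2 hh) hh
  have hG0 : G 0 = 0 := by simp [hG, hL]
  rw [hG0] at this
  show L h ≤ h ^ 2 / 8
  simp only [hG] at this
  linarith

open MeasureTheory

lemma integrable_of_abs_le {α : Type*} [MeasurableSpace α] (μ : Measure α) [IsFiniteMeasure μ]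
    {f : α → ℝ} (hf : Measurable f) (C : ℝ) (h : ∀ x, |f x| ≤ C) : Integrable f μ :=
  (integrable_const C).mono' hf.aestronglyMeasurable
    (Filter.Eventually.of_forall fun x => by simpa using h x)

lemma hoeffding_lemma {α : Type*} [MeasurableSpace α] (μ : Measure α) [IsProbabilityMeasure μ]
    (Z : α → ℝ) (hZ : Measurable Z) (c : ℝ) (hc : 0 < c)
    (hosc : ∀ x y, |Z x - Z y| ≤ c) (hmean : ∫ x, Z x ∂μ = 0)
    (t : ℝ) (ht : 0 ≤ t) :
    ∫ x, Real.exp (t * Z x) ∂μ ≤ Real.exp (t ^ 2 * c ^ 2 / 8) := by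
  have hne : Nonempty α := by
    by_contra h
    have hE : IsEmpty α := not_nonempty_iff.1 h
    have h1 : (1 : ENNReal) = 0 := by
      rw [← measure_univ (μ := μ), Set.univ_eq_empty_iff.mpr hE, measure_empty]
    exact one_ne_zero h1
  obtain ⟨x₀⟩ := id hne
  set b := sSup (Set.range Z) with hb
  have hbdd : BddAbove (Set.range Z) := by
    refine ⟨Z x₀ + c, ?_⟩
    rintro y ⟨x, rfl⟩
    have := abs_le.1 (hosc x x₀); linarith [this.2]
  have hZb : ∀ x, Z x ≤ b := fun x => le_csSup hbdd (Set.mem_range_self x)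
  have hbZ : ∀ x, b ≤ Z x + c := fun x => by
    apply csSup_le (Set.range_nonempty Z)
    rintro y ⟨x', rfl⟩
    have := abs_le.1 (hosc x' x); linarith [this.2]
  set a := b - c with ha
  have haZ : ∀ x, a ≤ Z x := fun x => by have := hbZ x; simp [ha]; linarith
  have hintZ : Integrable Z μ := by
    apply integrable_of_abs_le μ hZ (|Z x₀| + c)
    intro x
    have := abs_le.1 (hosc x x₀)
    rw [abs_le]; constructor <;> [linarith [neg_abs_le (Z x₀), this.1]; linarith [le_abs_self (Z x₀), this.2]]
  have ha0 : a ≤ 0 := by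
    have : ∫ _x, a ∂μ ≤ ∫ x, Z x ∂μ := integral_mono (integrable_const a) hintZ haZ
    simpa [hmean] using this
  have hb0 : 0 ≤ b := by
    have : ∫ x, Z x ∂μ ≤ ∫ _x, b ∂μ := integral_mono hintZ (integrable_const b) hZb
    simpa [hmean] using this
  set A := Real.exp (t * a) with hA
  set B := Real.exp (t * b) with hB
  have key : ∀ x, Real.exp (t * Z x) ≤ ((b * A - a * B) + Z x * (B - A)) / c := by
    intro x
    have hs : (0:ℝ) ≤ (b - Z x) / c := div_nonneg (by linarith [hZb x]) hc.le
    have hr : (0:ℝ) ≤ (Z x - a) / c := div_nonneg (by linarith [haZ x]) hc.le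
    have hsum : (b - Z x) / c + (Z x - a) / c = 1 := by field_simp [ha]; linarith
    have hcv := convexOn_exp.2 (Set.mem_univ (t * a)) (Set.mem_univ (t * b)) hs hr hsum
    simp only [smul_eq_mul] at hcv
    have harg : (b - Z x) / c * (t * a) + (Z x - a) / c * (t * b) = t * Z x := by
      field_simp [ha]; ring
    rw [harg] at hcv
    calc Real.exp (t * Z x) ≤ (b - Z x) / c * A + (Z x - a) / c * B := hcv
      _ = ((b * A - a * B) + Z x * (B - A)) / c := by field_simp; ring
  have hintexp : Integrable (fun x => Real.exp (t * Z x)) μ := by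
    apply integrable_of_abs_le μ (hZ.const_mul t).exp (Real.exp (t * b))
    intro x
    rw [abs_of_pos (Real.exp_pos _)]
    exact Real.exp_le_exp.2 (mul_le_mul_of_nonneg_left (hZb x) ht)
  have hint1 : Integrable (fun x => ((b * A - a * B) + Z x * (B - A)) / c) μ :=
    ((integrable_const _).add (hintZ.mul_const _)).div_const _
  have step1 : ∫ x, Real.exp (t * Z x) ∂μ ≤ ∫ x, ((b * A - a * B) + Z x * (B - A)) / c ∂μ :=
    integral_mono hintexp hint1 key
  have step2 : ∫ x, ((b * A - a * B) + Z x * (B - A)) / c ∂μ = (b * A - a * B) / c := by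
    rw [integral_div, integral_add (integrable_const _) (hintZ.mul_const _),
      integral_const, integral_mul_const, hmean]
    simp
  -- now the scalar bound
  set p := -a / c with hp
  have hp0 : 0 ≤ p := div_nonneg (by linarith) hc.le
  have hp1 : p ≤ 1 := by rw [hp, div_le_one hc]; linarith
  set h := t * c with hh
  have hh0 : 0 ≤ h := mul_nonneg ht hc.le
  have hD := D_pos hp0 hp1 h
  have ha' : a = -(p * c) := by rw [hp, div_mul_cancel₀ _ hc.ne']; ring
  have hb' : b = a + c := by simp [ha]
  have hident : (b * A - a * B) / c = Real.exp (-h * p) * (1 - p + p * Real.exp h) := by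
    have hta : t * a = -h * p := by rw [ha', hh]; ring
    have htb : t * b = t * a + h := by rw [hb', hh]; ring
    rw [hA, hB, htb, Real.exp_add, hta, hb', ha']
    field_simp
    ring
  calc ∫ x, Real.exp (t * Z x) ∂μ ≤ (b * A - a * B) / c := step1.trans (le_of_eq step2)
    _ = Real.exp (-h * p + Real.log (1 - p + p * Real.exp h)) := by
        rw [Real.exp_add, Real.exp_log hD, hident]
    _ ≤ Real.exp (h ^ 2 / 8) := Real.exp_le_exp.2 (lemA hp0 hp1 hh0)
    _ = Real.exp (t ^ 2 * c ^ 2 / 8) := by rw [hh, mul_pow]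

lemma hoeffding_lemma' {α : Type*} [MeasurableSpace α] (μ : Measure α) [IsProbabilityMeasure μ]
    (Z : α → ℝ) (hZ : Measurable Z) (c : ℝ) (hc : 0 < c)
    (hosc : ∀ x y, |Z x - Z y| ≤ c) (t : ℝ) (ht : 0 ≤ t) :
    ∫ x, Real.exp (t * Z x) ∂μ ≤ Real.exp (t * ∫ x, Z x ∂μ + t ^ 2 * c ^ 2 / 8) := by
  set m := ∫ x, Z x ∂μ with hm
  have hZ' : Measurable (fun x => Z x - m) := hZ.sub measurable_const
  have hosc' : ∀ x y, |(Z x - m) - (Z y - m)| ≤ c := fun x y => by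
    simpa using hosc x y
  rcases isEmpty_or_nonempty α with hE | hne
  · have h1 : (1 : ENNReal) = 0 := by
      rw [← measure_univ (μ := μ), Set.univ_eq_empty_iff.mpr hE, measure_empty]
    exact absurd h1 one_ne_zero
  obtain ⟨x₀⟩ := id hne
  have hintZ : Integrable Z μ := by
    apply integrable_of_abs_le μ hZ (|Z x₀| + c)
    intro x
    have := abs_le.1 (hosc x x₀)
    rw [abs_le]
    constructor <;> [linarith [neg_abs_le (Z x₀), this.1]; linarith [le_abs_self (Z x₀), this.2]]
  have hmean : ∫ x, (Z x - m) ∂μ = 0 := by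
    rw [integral_sub hintZ (integrable_const m), integral_const]
    simp [hm]
  have h := hoeffding_lemma μ (fun x => Z x - m) hZ' c hc hosc' hmean t ht
  have heq : ∀ x, Real.exp (t * Z x) = Real.exp (t * m) * Real.exp (t * (Z x - m)) := fun x => by
    rw [← Real.exp_add]; ring_nf
  calc ∫ x, Real.exp (t * Z x) ∂μ
      = Real.exp (t * m) * ∫ x, Real.exp (t * (Z x - m)) ∂μ := by
        simp_rw [heq]; rw [integral_const_mul]
    _ ≤ Real.exp (t * m) * Real.exp (t ^ 2 * c ^ 2 / 8) :=
        mul_le_mul_of_nonneg_left h (Real.exp_pos _).le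
    _ = Real.exp (t * m + t ^ 2 * c ^ 2 / 8) := (Real.exp_add _ _).symm

lemma osc_bound {n : ℕ} {Ω : Fin n → Type*} (X : (∀ k, Ω k) → ℝ) (c : ℝ) (hc : 0 ≤ c)
    (hbd : ∀ (k : Fin n) (ω ω' : ∀ k, Ω k), (∀ j, j ≠ k → ω j = ω' j) → |X ω - X ω'| ≤ c)
    (ω ω' : ∀ k, Ω k) : |X ω - X ω'| ≤ n * c := by
  classical
  set H : ℕ → (∀ k, Ω k) := fun k j => if (j : ℕ) < k then ω' j else ω j with hH
  have key : ∀ k, k ≤ n → |X ω - X (H k)| ≤ k * c := by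
    intro k hk
    induction k with
    | zero =>
      have : H 0 = ω := by funext j; simp [hH]
      simp [this]
    | succ k ihk =>
      have hkn : k < n := lt_of_lt_of_le (Nat.lt_succ_self k) hk
      have h1 := ihk (le_of_lt (Nat.lt_of_lt_of_le (Nat.lt_succ_self k) hk))
      have h2 : |X (H k) - X (H (k + 1))| ≤ c := by
        apply hbd ⟨k, hkn⟩
        intro j hj
        simp only [hH]
        have : (j : ℕ) ≠ k := fun h => hj (Fin.ext h)
        rcases Nat.lt_or_ge (j : ℕ) k with h | h
        · rw [if_pos h, if_pos (Nat.lt_succ_of_lt h)]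
        · rw [if_neg (not_lt.2 h), if_neg (not_lt.2 (Nat.succ_le_of_lt (lt_of_le_of_ne h (Ne.symm this))))]
      calc |X ω - X (H (k + 1))| ≤ |X ω - X (H k)| + |X (H k) - X (H (k + 1))| := by
            have := abs_sub_abs_le_abs_sub (X ω - X (H k)) (X (H (k+1)) - X (H k))
            calc |X ω - X (H (k+1))| = |(X ω - X (H k)) + (X (H k) - X (H (k+1)))| := by ring_nf
              _ ≤ _ := abs_add_le _ _
        _ ≤ k * c + c := add_le_add h1 h2
        _ = (k + 1 : ℕ) * c := by push_cast; ring
  have hHn : H n = ω' := by funext j; simp [hH, j.isLt]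
  have := key n le_rfl
  rwa [hHn] at this

lemma nonempty_of_prob {α : Type*} [MeasurableSpace α] (μ : Measure α)
    [IsProbabilityMeasure μ] : Nonempty α := by
  by_contra h
  have hE : IsEmpty α := not_nonempty_iff.1 h
  have h1 : (1 : ENNReal) = 0 := by
    rw [← measure_univ (μ := μ), Set.univ_eq_empty_iff.mpr hE, measure_empty]
  exact one_ne_zero h1

universe u

lemma mgf_pi (n : ℕ) : ∀ {Ω : Fin n → Type u} [inst : ∀ k, MeasurableSpace (Ω k)]
    (μs : ∀ k, Measure (Ω k)) [instP : ∀ k, IsProbabilityMeasure (μs k)]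
    (X : (∀ k, Ω k) → ℝ) (_hX : Measurable X) (c : ℝ) (_hc : 0 < c)
    (_hbd : ∀ (k : Fin n) (ω ω' : ∀ k, Ω k), (∀ j, j ≠ k → ω j = ω' j) → |X ω - X ω'| ≤ c)
    (t : ℝ) (_ht : 0 ≤ t),
    ∫ ω, Real.exp (t * X ω) ∂Measure.pi μs ≤
      Real.exp (t * ∫ ω, X ω ∂Measure.pi μs + n * (t ^ 2 * c ^ 2 / 8)) := by
  induction n with
  | zero =>
    intro Ω inst μs instP X hX c hc hbd t ht
    have hu : ∀ ω : ∀ k : Fin 0, Ω k, X ω = X (fun k => k.elim0) := by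
      intro ω; congr 1; funext k; exact k.elim0
    simp_rw [hu]
    rw [integral_const, integral_const]
    simp
  | succ n ih =>
    intro Ω inst μs instP X hX c hc hbd t ht
    classical
    set e := MeasurableEquiv.piFinSuccAbove Ω 0 with he
    have hmp := measurePreserving_piFinSuccAbove μs 0
    set ν := Measure.pi (fun j => μs ((0 : Fin (n+1)).succAbove j)) with hν
    set Pr := (μs 0).prod ν with hPr
    -- coordinates of e.symm
    have hc0 : ∀ (x : Ω 0) (r : ∀ j, Ω ((0 : Fin (n+1)).succAbove j)),
        e.symm (x, r) 0 = x := by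
      intro x r
      show (Fin.insertNthEquiv Ω 0) (x, r) 0 = x
      simp
      rfl
    have hcs : ∀ (x : Ω 0) (r : ∀ j, Ω ((0 : Fin (n+1)).succAbove j)) (j : Fin n),
        e.symm (x, r) ((0 : Fin (n+1)).succAbove j) = r j := by
      intro x r j
      show (Fin.insertNthEquiv Ω 0) (x, r) (Fin.succAbove 0 j) = r j
      simp [Fin.insertNth_apply_succAbove]
      rfl
    -- nonemptiness and boundedness of X
    have hnty : ∀ k, Nonempty (Ω k) := fun k => nonempty_of_prob (μs k)
    have hne : Nonempty (∀ k, Ω k) := ⟨fun k => Classical.arbitrary (Ω k)⟩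
    obtain ⟨ω₀⟩ := id hne
    have hXbd : ∀ ω, |X ω| ≤ |X ω₀| + (n+1) * c := by
      intro ω
      have h1 := osc_bound X c hc.le hbd ω ω₀
      have h2 := abs_le.1 h1
      rw [abs_le]
      push_cast at h2 ⊢
      constructor <;> [linarith [neg_abs_le (X ω₀)]; linarith [le_abs_self (X ω₀)]]
    set M : ℝ := |X ω₀| + (n+1) * c with hM
    have hM0 : 0 ≤ M := le_trans (abs_nonneg _) (hXbd ω₀)
    -- f on the product
    set f : Ω 0 × (∀ j, Ω ((0 : Fin (n+1)).succAbove j)) → ℝ := fun z => X (e.symm z) with hf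
    have hfm : Measurable f := hX.comp e.symm.measurable
    have hfbd : ∀ z, |f z| ≤ M := fun z => hXbd _
    have hint_f : Integrable f Pr := integrable_of_abs_le Pr hfm M hfbd
    have hint_exp : Integrable (fun z => Real.exp (t * f z)) Pr := by
      apply integrable_of_abs_le Pr (hfm.const_mul t).exp (Real.exp (t * M))
      intro z
      rw [abs_of_pos (Real.exp_pos _)]
      exact Real.exp_le_exp.2 (mul_le_mul_of_nonneg_left
        (le_trans (le_abs_self _) (hfbd z)) ht)
    -- transfer from pi to prod
    have htrans : ∀ (g : (∀ k, Ω k) → ℝ),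
        ∫ z, g (e.symm z) ∂Pr = ∫ ω, g ω ∂Measure.pi μs := fun g =>
      (hmp.symm e).integral_comp' g
    -- Y : partial average over coordinate 0
    set Y : (∀ j, Ω ((0 : Fin (n+1)).succAbove j)) → ℝ := fun r => ∫ x, f (x, r) ∂μs 0 with hY
    have hYm : Measurable Y :=
      hfm.stronglyMeasurable.integral_prod_left'.measurable
    have hYbd : ∀ r, |Y r| ≤ M := by
      intro r
      calc |Y r| ≤ ∫ x, |f (x, r)| ∂μs 0 := by
            simpa [hY] using norm_integral_le_integral_norm (fun x => f (x, r)) (μ := μs 0)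
        _ ≤ ∫ _x, M ∂μs 0 := by
            apply integral_mono _ (integrable_const M) (fun x => hfbd _)
            exact (integrable_of_abs_le _ (hfm.comp measurable_prodMk_right) M
              (fun x => hfbd _)).abs
        _ = M := by simp
    -- inner Hoeffding bound
    have hinner : ∀ r, ∫ x, Real.exp (t * f (x, r)) ∂μs 0 ≤
        Real.exp (t * Y r + t ^ 2 * c ^ 2 / 8) := by
      intro r
      apply hoeffding_lemma' (μs 0) (fun x => f (x, r))
        (hfm.comp measurable_prodMk_right) c hc _ t ht
      intro x y
      apply hbd 0
      intro j hj
      obtain ⟨j', rfl⟩ := Fin.exists_succAbove_eq hj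
      rw [hcs, hcs]
    -- integrability of the intermediate functions over ν
    have hint_expY : Integrable (fun r => Real.exp (t * Y r + t ^ 2 * c ^ 2 / 8)) ν := by
      apply integrable_of_abs_le ν (((hYm.const_mul t).add_const _).exp)
        (Real.exp (t * M + t ^ 2 * c ^ 2 / 8))
      intro r
      rw [abs_of_pos (Real.exp_pos _)]
      apply Real.exp_le_exp.2
      exact add_le_add_left (mul_le_mul_of_nonneg_left (le_trans (le_abs_self _) (hYbd r)) ht) _
    have hfub : ∫ z, Real.exp (t * f z) ∂Pr =
        ∫ r, ∫ x, Real.exp (t * f (x, r)) ∂μs 0 ∂ν :=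
      integral_prod_symm _ hint_exp
    have hint_inner : Integrable (fun r => ∫ x, Real.exp (t * f (x, r)) ∂μs 0) ν :=
      hint_exp.integral_prod_right
    -- Y satisfies the bounded differences property
    have hYbdiff : ∀ (k : Fin n) (r r' : ∀ j, Ω ((0 : Fin (n+1)).succAbove j)),
        (∀ j, j ≠ k → r j = r' j) → |Y r - Y r'| ≤ c := by
      intro k r r' hrr'
      have hint1 : Integrable (fun x => f (x, r)) (μs 0) :=
        integrable_of_abs_le _ (hfm.comp measurable_prodMk_right) M (fun x => hfbd _)
      have hint2 : Integrable (fun x => f (x, r')) (μs 0) :=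
        integrable_of_abs_le _ (hfm.comp measurable_prodMk_right) M (fun x => hfbd _)
      rw [hY]
      simp only []
      rw [← integral_sub hint1 hint2]
      calc |∫ x, (f (x, r) - f (x, r')) ∂μs 0| ≤ ∫ x, |f (x, r) - f (x, r')| ∂μs 0 := by
            simpa using norm_integral_le_integral_norm
              (fun x => f (x, r) - f (x, r')) (μ := μs 0)
        _ ≤ ∫ _x, c ∂μs 0 := by
            apply integral_mono ((hint1.sub hint2).abs) (integrable_const c)
            intro x
            apply hbd ((0 : Fin (n+1)).succAbove k)
            intro j hj
            rcases eq_or_ne j 0 with rfl | hj0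
            · rw [hc0, hc0]
            · obtain ⟨j', rfl⟩ := Fin.exists_succAbove_eq hj0
              have hj'k : j' ≠ k := by
                intro h; exact hj (by rw [h])
              rw [hcs, hcs, hrr' j' hj'k]
        _ = c := by simp
    -- apply induction hypothesis
    have hIH := ih (fun j => μs ((0 : Fin (n+1)).succAbove j)) Y hYm c hc hYbdiff t ht
    -- ∫ Y ∂ν = ∫ X ∂pi
    have hEY : ∫ r, Y r ∂ν = ∫ ω, X ω ∂Measure.pi μs := by
      rw [hY]
      simp only []
      rw [← integral_prod_symm _ hint_f, htrans]
    -- combine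
    calc ∫ ω, Real.exp (t * X ω) ∂Measure.pi μs
        = ∫ z, Real.exp (t * f z) ∂Pr := (htrans (fun ω => Real.exp (t * X ω))).symm
      _ = ∫ r, ∫ x, Real.exp (t * f (x, r)) ∂μs 0 ∂ν := hfub
      _ ≤ ∫ r, Real.exp (t * Y r + t ^ 2 * c ^ 2 / 8) ∂ν :=
          integral_mono hint_inner hint_expY hinner
      _ = Real.exp (t ^ 2 * c ^ 2 / 8) * ∫ r, Real.exp (t * Y r) ∂ν := by
          simp_rw [Real.exp_add, mul_comm]
          rw [integral_const_mul]
      _ ≤ Real.exp (t ^ 2 * c ^ 2 / 8) *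
            Real.exp (t * ∫ r, Y r ∂ν + n * (t ^ 2 * c ^ 2 / 8)) :=
          mul_le_mul_of_nonneg_left hIH (Real.exp_pos _).le
      _ = Real.exp (t * ∫ ω, X ω ∂Measure.pi μs + (n + 1 : ℕ) * (t ^ 2 * c ^ 2 / 8)) := by
          rw [← Real.exp_add, hEY]
          congr 1
          push_cast
          ring

/-- McDiarmid's bounded differences inequality: if `X` on a product probability
space is uniformly difference-bounded by `lam / m` (changing any single
coordinate changes `X` by at most `lam / m`), then for `τ > 0`,
`P(X - E[X] ≥ τ) ≤ exp(-2τ²m/lam²)`. -/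
theorem mcdiarmid_inequality {m : ℕ} (hm : 0 < m) {Ω : Fin m → Type*}
    [∀ k, MeasurableSpace (Ω k)] (μs : ∀ k, Measure (Ω k))
    [∀ k, IsProbabilityMeasure (μs k)]
    (X : (∀ k, Ω k) → ℝ) (hX : Measurable X)
    (lam : ℝ) (hlam : 0 < lam)
    (hbd : ∀ (k : Fin m) (ω ω' : ∀ k, Ω k),
      (∀ j, j ≠ k → ω j = ω' j) → |X ω - X ω'| ≤ lam / m)
    (τ : ℝ) (hτ : 0 < τ) :
    Measure.pi μs {ω | X ω - (∫ x, X x ∂(Measure.pi μs)) ≥ τ}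
      ≤ ENNReal.ofReal (Real.exp (-(2 * τ ^ 2 * m) / lam ^ 2)) := by
  have hm' : (0:ℝ) < m := Nat.cast_pos.2 hm
  have hmne : (m:ℝ) ≠ 0 := hm'.ne'
  set c : ℝ := lam / m with hcdef
  have hc : 0 < c := div_pos hlam hm'
  set μ0 := ∫ x, X x ∂(Measure.pi μs) with hμ0
  set X' : (∀ k, Ω k) → ℝ := fun ω => X ω - μ0 with hX'def
  have hX' : Measurable X' := hX.sub measurable_const
  have hbd' : ∀ (k : Fin m) (ω ω' : ∀ k, Ω k),
      (∀ j, j ≠ k → ω j = ω' j) → |X' ω - X' ω'| ≤ c := by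
    intro k ω ω' h
    have := hbd k ω ω' h
    simpa [hX'def] using this
  set t : ℝ := 4 * τ * m / lam ^ 2 with htdef
  have ht : 0 < t := by positivity
  -- integrability of X
  have hne : Nonempty (∀ k, Ω k) := ⟨fun k => @Classical.arbitrary (Ω k) (nonempty_of_prob (μs k))⟩
  obtain ⟨ω₀⟩ := id hne
  have hXbd : ∀ ω, |X ω| ≤ |X ω₀| + m * c := fun ω => by
    have h1 := abs_le.1 (osc_bound X c hc.le hbd ω ω₀)
    rw [abs_le]
    constructor <;> [linarith [neg_abs_le (X ω₀), h1.1]; linarith [le_abs_self (X ω₀), h1.2]]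
  have hintX : Integrable X (Measure.pi μs) :=
    integrable_of_abs_le _ hX (|X ω₀| + m * c) hXbd
  have hmeanX' : ∫ ω, X' ω ∂(Measure.pi μs) = 0 := by
    rw [hX'def]
    simp only []
    rw [integral_sub hintX (integrable_const μ0), integral_const]
    simp [hμ0]
  have hmgf := mgf_pi m μs X' hX' c hc hbd' t ht.le
  rw [hmeanX'] at hmgf
  have hintexp : Integrable (fun ω => Real.exp (t * X' ω)) (Measure.pi μs) := by
    apply integrable_of_abs_le _ (hX'.const_mul t).exp (Real.exp (t * (|X ω₀| + m * c + |μ0|)))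
    intro ω
    rw [abs_of_pos (Real.exp_pos _)]
    apply Real.exp_le_exp.2
    apply mul_le_mul_of_nonneg_left _ ht.le
    have h1 := hXbd ω
    have h2 := abs_le.1 h1
    rw [hX'def]
    simp only []
    linarith [neg_abs_le μ0, le_abs_self μ0, h2.2]
  -- Markov
  have hset : {ω | X ω - μ0 ≥ τ} = {ω | Real.exp (t * τ) ≤ Real.exp (t * X' ω)} := by
    ext ω
    simp only [Set.mem_setOf_eq, Real.exp_le_exp, hX'def]
    constructor
    · intro h; exact mul_le_mul_of_nonneg_left h ht.le
    · intro h; exact le_of_mul_le_mul_left h ht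
  have hmarkov := mul_meas_ge_le_integral_of_nonneg
    (Filter.Eventually.of_forall fun ω => (Real.exp_pos (t * X' ω)).le) hintexp
    (Real.exp (t * τ)) (μ := Measure.pi μs)
  have hfin : Measure.pi μs {ω | X ω - μ0 ≥ τ} ≠ ⊤ := by
    exact (measure_lt_top _ _).ne
  have htoReal : (Measure.pi μs {ω | X ω - μ0 ≥ τ}).toReal ≤
      Real.exp (-(2 * τ ^ 2 * m) / lam ^ 2) := by
    rw [hset]
    have h1 : (Measure.pi μs {ω | Real.exp (t * τ) ≤ Real.exp (t * X' ω)}).toReal ≤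
        (∫ ω, Real.exp (t * X' ω) ∂Measure.pi μs) / Real.exp (t * τ) := by
      rw [le_div_iff₀ (Real.exp_pos _)]
      rw [mul_comm]
      exact hmarkov
    apply h1.trans
    calc (∫ ω, Real.exp (t * X' ω) ∂Measure.pi μs) / Real.exp (t * τ)
        ≤ Real.exp (t * 0 + m * (t ^ 2 * c ^ 2 / 8)) / Real.exp (t * τ) :=
          (div_le_div_iff_of_pos_right (Real.exp_pos _)).2 hmgf
      _ = Real.exp (t * 0 + m * (t ^ 2 * c ^ 2 / 8) - t * τ) := (Real.exp_sub _ _).symm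
      _ = Real.exp (-(2 * τ ^ 2 * m) / lam ^ 2) := by
          congr 1
          rw [htdef, hcdef]
          field_simp
          ring
  rw [← ENNReal.ofReal_toReal hfin]
  exact ENNReal.ofReal_le_ofReal htoReal
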